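/- Let a, b, δ > 0 with a ≠ b. Then the minimum distance between the boundary ellipse ∂E(a,b) and the enlarged boundary ellipse ∂E(a+δ, b+δ) is strictly less than δ: there exist u ∈ ∂E(a,b) and w ∈ ∂E(a+δ, b+δ) with ‖u − w‖ < δ. -/

import Mathlib

open Filter Topology

/-- The boundary of the solid ellipse with semi-axes `a` and `b`. -/
def ellipseBoundary (a b : ℝ) : Set (EuclideanSpace ℝ (Fin 2)) :=
  {p | (p 0) ^ 2 / a ^ 2 + (p 1) ^ 2 / b ^ 2 = 1}

/-- If `f` has nonzero derivative at `c`, then `f c` is not a minimum value. -/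
lemma exists_lt_of_hasDerivAt_ne_zero {f : ℝ → ℝ} {c d : ℝ}
    (hf : HasDerivAt f d c) (hd : d ≠ 0) : ∃ s, f s < f c := by
  rw [hasDerivAt_iff_tendsto_slope] at hf
  rcases hd.lt_or_gt with h | h
  · -- d < 0 : take s > c with negative slope
    have hev : ∀ᶠ s in 𝓝[≠] c, slope f c s < 0 :=
      hf.eventually (Filter.Tendsto.eventually_lt_const h tendsto_id |>.mono fun x hx => hx)
    have hev' : ∀ᶠ s in 𝓝[>] c, slope f c s < 0 :=
      hev.filter_mono (nhdsWithin_mono c fun x hx => ne_of_gt hx)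
    obtain ⟨s, hslope, hmem⟩ := (hev'.and self_mem_nhdsWithin).exists
    refine ⟨s, ?_⟩
    have hsc : (0:ℝ) < s - c := sub_pos.mpr hmem
    rw [slope_def_field] at hslope
    rw [div_neg_iff] at hslope
    rcases hslope with ⟨h1, h2⟩ | ⟨h1, h2⟩
    · linarith
    · linarith
  · -- d > 0 : take s < c with positive slope
    have hev : ∀ᶠ s in 𝓝[≠] c, 0 < slope f c s :=
      hf.eventually (Filter.Tendsto.eventually_const_lt h tendsto_id |>.mono fun x hx => hx)
    have hev' : ∀ᶠ s in 𝓝[<] c, 0 < slope f c s :=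
      hev.filter_mono (nhdsWithin_mono c fun x hx => ne_of_lt hx)
    obtain ⟨s, hslope, hmem⟩ := (hev'.and self_mem_nhdsWithin).exists
    refine ⟨s, ?_⟩
    have hsc : s - c < 0 := sub_neg.mpr hmem
    rw [slope_def_field] at hslope
    rw [div_pos_iff] at hslope
    rcases hslope with ⟨h1, h2⟩ | ⟨h1, h2⟩
    · linarith
    · linarith

/-- For `a ≠ b`, the minimum distance between `∂E(a,b)` and `∂E(a+δ, b+δ)` is
strictly less than `δ`. -/
theorem boundary_dist_lt_delta
    (a b δ : ℝ) (ha : 0 < a) (hb : 0 < b) (hδ : 0 < δ) (hab : a ≠ b) :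
    ∃ u ∈ ellipseBoundary a b, ∃ w ∈ ellipseBoundary (a + δ) (b + δ), ‖u - w‖ < δ := by
  set c : ℝ := Real.pi / 4 with hc
  have hsc : Real.sin c * Real.cos c = 1 / 2 := by
    rw [hc, Real.sin_pi_div_four, Real.cos_pi_div_four]
    rw [div_mul_div_comm, Real.mul_self_sqrt (by norm_num)]
    norm_num
  set w0 : ℝ := (a + δ) * Real.cos c with hw0
  set w1 : ℝ := (b + δ) * Real.sin c with hw1
  set f : ℝ → ℝ := fun s => (a * Real.cos s - w0) ^ 2 + (b * Real.sin s - w1) ^ 2 with hfdef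
  have hder : HasDerivAt f (δ * (a - b)) c := by
    have h1 : HasDerivAt (fun s => (a * Real.cos s - w0) ^ 2)
        (2 * (a * Real.cos c - w0) ^ 1 * (a * (-Real.sin c))) c := by
      exact (((Real.hasDerivAt_cos c).const_mul a).sub_const w0).pow 2
    have h2 : HasDerivAt (fun s => (b * Real.sin s - w1) ^ 2)
        (2 * (b * Real.sin c - w1) ^ 1 * (b * Real.cos c)) c := by
      exact (((Real.hasDerivAt_sin c).const_mul b).sub_const w1).pow 2
    have := h1.add h2
    refine this.congr_deriv ?_
    rw [hw0, hw1]
    linear_combination (2 * δ * (a - b)) * hsc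
  have hfc : f c = δ ^ 2 := by
    have : f c = δ ^ 2 * (Real.sin c ^ 2 + Real.cos c ^ 2) := by
      rw [hfdef, hw0, hw1]; ring
    rw [this, Real.sin_sq_add_cos_sq, mul_one]
  have hd : δ * (a - b) ≠ 0 := mul_ne_zero hδ.ne' (sub_ne_zero.mpr hab)
  obtain ⟨s, hs⟩ := exists_lt_of_hasDerivAt_ne_zero hder hd
  rw [hfc] at hs
  refine ⟨(!₂[a * Real.cos s, b * Real.sin s] : EuclideanSpace ℝ (Fin 2)), ?_,
    (!₂[w0, w1] : EuclideanSpace ℝ (Fin 2)), ?_, ?_⟩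
  · show (a * Real.cos s) ^ 2 / a ^ 2 + (b * Real.sin s) ^ 2 / b ^ 2 = 1
    field_simp
    linear_combination Real.sin_sq_add_cos_sq s
  · show w0 ^ 2 / (a + δ) ^ 2 + w1 ^ 2 / (b + δ) ^ 2 = 1
    rw [hw0, hw1]
    have haδ : a + δ ≠ 0 := by positivity
    have hbδ : b + δ ≠ 0 := by positivity
    field_simp
    linear_combination Real.sin_sq_add_cos_sq c
  · rw [EuclideanSpace.norm_eq]
    rw [Real.sqrt_lt' hδ]
    have h0 : ((!₂[a * Real.cos s, b * Real.sin s] : EuclideanSpace ℝ (Fin 2)) -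
        !₂[w0, w1]) 0 = a * Real.cos s - w0 := rfl
    have h1 : ((!₂[a * Real.cos s, b * Real.sin s] : EuclideanSpace ℝ (Fin 2)) -
        !₂[w0, w1]) 1 = b * Real.sin s - w1 := rfl
    rw [Fin.sum_univ_two, h0, h1]
    simpa [Real.norm_eq_abs, sq_abs] using hs
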